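/- Let K₁, K₂ : ℝ³×ℝ³ → ℂ be measurable kernels satisfying |K_l(x,y)| ≤ c_l e^{−γ_l|x−y|}/|x−y| for x ≠ y (l = 1,2), with constants c_l, γ_l > 0. Set γ := min{γ₁,γ₂}. Then there is a constant c > 0 such that for all x, y ∈ ℝ³: ∫_{ℝ³} |K₁(x,z) K₂(z,y)| dz ≤ (c/γ) e^{−(γ/2)|x−y|}. -/

import Mathlib

set_option maxHeartbeats 1000000

open MeasureTheory ENNReal

noncomputable section

abbrev E3 := EuclideanSpace ℝ (Fin 3)

namespace KernelBoundAux

lemma meas_g (ς : ℝ) :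
    Measurable fun r : ℝ => ENNReal.ofReal (Real.exp (-(ς * r)) / r ^ 2) := by
  fun_prop

lemma J_lt_top (ς : ℝ) (hς : 0 < ς) :
    ∫⁻ v : E3, ENNReal.ofReal (Real.exp (-(ς * ‖v‖)) / ‖v‖ ^ 2) < ⊤ := by
  set f : ℝ → ℝ≥0∞ := fun r => ENNReal.ofReal (Real.exp (-(ς * r)) / r ^ 2) with hf
  have hfm : Measurable f := meas_g ς
  set μs := (volume : Measure E3).toSphere with hμs
  set n := Module.finrank ℝ E3 - 1 with hn
  have hdim : n = 2 := by
    simp [hn, finrank_euclideanSpace_fin]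
  have h1 : ∫⁻ x : ({0}ᶜ : Set E3), f ‖x.1‖ ∂((volume : Measure E3).comap Subtype.val)
      = ∫⁻ v : E3, f ‖v‖ := by
    rw [lintegral_subtype_comap (measurableSet_singleton (0:E3)).compl
      (fun v : E3 => f ‖v‖), restrict_compl_singleton]
  have hmeasf2 : Measurable fun p : Metric.sphere (0:E3) 1 × Set.Ioi (0:ℝ) => f p.2.1 :=
    hfm.comp (measurable_subtype_coe.comp measurable_snd)
  have h2 : ∫⁻ x : ({0}ᶜ : Set E3), f ‖x.1‖ ∂((volume : Measure E3).comap Subtype.val)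
      = ∫⁻ p : Metric.sphere (0:E3) 1 × Set.Ioi (0:ℝ), f p.2.1
          ∂(μs.prod (Measure.volumeIoiPow n)) := by
    rw [← (Measure.measurePreserving_homeomorphUnitSphereProd
      (volume : Measure E3)).lintegral_comp hmeasf2]
    exact lintegral_congr fun x => by simp
  have h3 : ∫⁻ p : Metric.sphere (0:E3) 1 × Set.Ioi (0:ℝ), f p.2.1
        ∂(μs.prod (Measure.volumeIoiPow n))
      = (∫⁻ r : Set.Ioi (0:ℝ), f r.1 ∂(Measure.volumeIoiPow n)) * μs Set.univ := by
    rw [lintegral_prod _ hmeasf2.aemeasurable]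
    simp [lintegral_const]
  have h4 : ∫⁻ r : Set.Ioi (0:ℝ), f r.1 ∂(Measure.volumeIoiPow n)
      = ∫⁻ r in Set.Ioi (0:ℝ), ENNReal.ofReal (r ^ n) * f r ∂(volume : Measure ℝ) := by
    rw [Measure.volumeIoiPow,
      lintegral_withDensity_eq_lintegral_mul _
        ((measurable_subtype_coe.pow_const n).ennreal_ofReal)
        (show Measurable fun r : Set.Ioi (0:ℝ) => f r.1 from hfm.comp measurable_subtype_coe)]
    exact lintegral_subtype_comap measurableSet_Ioi fun r => ENNReal.ofReal (r ^ n) * f r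
  have h5 : ∫⁻ r in Set.Ioi (0:ℝ), ENNReal.ofReal (r ^ n) * f r ∂(volume : Measure ℝ)
      = ∫⁻ r in Set.Ioi (0:ℝ), ENNReal.ofReal (Real.exp (-(ς * r))) ∂(volume : Measure ℝ) := by
    refine setLIntegral_congr_fun measurableSet_Ioi (fun r hr => ?_)
    have hr0 : (0:ℝ) < r := hr
    rw [hdim, hf, ← ENNReal.ofReal_mul (by positivity)]
    congr 1
    field_simp
  have h6 : ∫⁻ r in Set.Ioi (0:ℝ), ENNReal.ofReal (Real.exp (-(ς * r))) ∂(volume : Measure ℝ)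
      < ⊤ := by
    have hi : IntegrableOn (fun r : ℝ => Real.exp (-ς * r)) (Set.Ioi 0) :=
      exp_neg_integrableOn_Ioi 0 hς
    have h := hi.2
    rw [HasFiniteIntegral] at h
    refine lt_of_le_of_lt (le_of_eq (lintegral_congr fun r => ?_)) h
    rw [← Real.enorm_eq_ofReal (Real.exp_nonneg _)]
    simp [neg_mul]
  calc ∫⁻ v : E3, f ‖v‖ = _ := h1.symm
    _ = _ := h2
    _ = _ := h3
    _ < ⊤ := ENNReal.mul_lt_top (h4 ▸ h5 ▸ h6) (measure_lt_top _ _)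

end KernelBoundAux

theorem kernel_composition_bound
    (K₁ K₂ : E3 → E3 → ℂ) (c₁ c₂ γ₁ γ₂ : ℝ)
    (hc₁ : 0 < c₁) (hc₂ : 0 < c₂) (hγ₁ : 0 < γ₁) (hγ₂ : 0 < γ₂)
    (hK₁ : Measurable (Function.uncurry K₁)) (hK₂ : Measurable (Function.uncurry K₂))
    (hb₁ : ∀ x y : E3, x ≠ y → ‖K₁ x y‖ ≤ c₁ * Real.exp (-γ₁ * ‖x - y‖) / ‖x - y‖)
    (hb₂ : ∀ x y : E3, x ≠ y → ‖K₂ x y‖ ≤ c₂ * Real.exp (-γ₂ * ‖x - y‖) / ‖x - y‖) :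
    ∃ c > 0, ∀ x y : E3,
      ∫⁻ z : E3, (‖K₁ x z‖₊ : ℝ≥0∞) * (‖K₂ z y‖₊ : ℝ≥0∞) ≤
        ENNReal.ofReal (c / min γ₁ γ₂ * Real.exp (-(min γ₁ γ₂ / 2) * ‖x - y‖)) := by
  set γ := min γ₁ γ₂ with hγdef
  have hγ : 0 < γ := lt_min hγ₁ hγ₂
  set J₁ := ∫⁻ v : E3, ENNReal.ofReal (Real.exp (-(γ₁ * ‖v‖)) / ‖v‖ ^ 2) with hJ₁def
  set J₂ := ∫⁻ v : E3, ENNReal.ofReal (Real.exp (-(γ₂ * ‖v‖)) / ‖v‖ ^ 2) with hJ₂def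
  have hJ₁t : J₁ ≠ ⊤ := (KernelBoundAux.J_lt_top γ₁ hγ₁).ne
  have hJ₂t : J₂ ≠ ⊤ := (KernelBoundAux.J_lt_top γ₂ hγ₂).ne
  set T : ℝ := J₁.toReal + J₂.toReal with hTdef
  have hT0 : 0 ≤ T := add_nonneg ENNReal.toReal_nonneg ENNReal.toReal_nonneg
  refine ⟨γ * (c₁ * c₂ / 2 * T + 1), by positivity, fun x y => ?_⟩
  have hcγ : γ * (c₁ * c₂ / 2 * T + 1) / γ = c₁ * c₂ / 2 * T + 1 := by
    rw [mul_comm, mul_div_assoc, div_self hγ.ne', mul_one]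
  set Eexp := Real.exp (-(γ / 2) * ‖x - y‖) with hEdef
  have hE0 : 0 < Eexp := Real.exp_pos _
  -- measurability of the two comparison functions
  have hg₁m : Measurable fun z : E3 =>
      ENNReal.ofReal (Real.exp (-(γ₁ * ‖x - z‖)) / ‖x - z‖ ^ 2) := by fun_prop
  have hg₂m : Measurable fun z : E3 =>
      ENNReal.ofReal (Real.exp (-(γ₂ * ‖z - y‖)) / ‖z - y‖ ^ 2) := by fun_prop
  -- a.e. pointwise bound
  have hxae : ∀ᵐ z : E3, z ≠ x := by
    rw [ae_iff]
    simp only [not_not, Set.setOf_eq_eq_singleton]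
    exact measure_singleton x
  have hyae : ∀ᵐ z : E3, z ≠ y := by
    rw [ae_iff]
    simp only [not_not, Set.setOf_eq_eq_singleton]
    exact measure_singleton y
  have key : ∀ᵐ z : E3, (‖K₁ x z‖₊ : ℝ≥0∞) * (‖K₂ z y‖₊ : ℝ≥0∞) ≤
      ENNReal.ofReal (c₁ * c₂ / 2 * Eexp) *
        (ENNReal.ofReal (Real.exp (-(γ₁ * ‖x - z‖)) / ‖x - z‖ ^ 2) +
         ENNReal.ofReal (Real.exp (-(γ₂ * ‖z - y‖)) / ‖z - y‖ ^ 2)) := by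
    filter_upwards [hxae, hyae] with z hzx hzy
    set a := ‖x - z‖ with hadef
    set b := ‖z - y‖ with hbdef
    have ha : 0 < a := by
      rw [hadef, norm_pos_iff, sub_ne_zero]
      exact hzx.symm
    have hb : 0 < b := by
      rw [hbdef, norm_pos_iff, sub_ne_zero]
      exact hzy
    have hd : ‖x - y‖ ≤ a + b := by
      simpa [hadef, hbdef, dist_eq_norm] using dist_triangle x z y
    have h1 := hb₁ x z hzx.symm
    have h2 := hb₂ z y hzy
    simp only [neg_mul] at h1 h2
    set e1 := Real.exp (-(γ₁ / 2 * a)) with he1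
    set e2 := Real.exp (-(γ₂ / 2 * b)) with he2
    have he1p : 0 < e1 := Real.exp_pos _
    have he2p : 0 < e2 := Real.exp_pos _
    have hsq1 : Real.exp (-(γ₁ * a)) = e1 * e1 := by
      rw [he1, ← Real.exp_add]; ring_nf
    have hsq2 : Real.exp (-(γ₂ * b)) = e2 * e2 := by
      rw [he2, ← Real.exp_add]; ring_nf
    have hEe : e1 * e2 ≤ Eexp := by
      rw [he1, he2, ← Real.exp_add, hEdef]
      apply Real.exp_le_exp.2
      have p1 : 0 ≤ (γ₁ - γ) * a :=
        mul_nonneg (sub_nonneg.2 (min_le_left γ₁ γ₂)) ha.le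
      have p2 : 0 ≤ (γ₂ - γ) * b :=
        mul_nonneg (sub_nonneg.2 (min_le_right γ₁ γ₂)) hb.le
      have p3 : γ / 2 * ‖x - y‖ ≤ γ / 2 * (a + b) :=
        mul_le_mul_of_nonneg_left hd (by positivity)
      nlinarith
    have hAM : e1 / a * (e2 / b) ≤ 1 / 2 * ((e1 / a) ^ 2 + (e2 / b) ^ 2) := by
      nlinarith [sq_nonneg (e1 / a - e2 / b)]
    have hreal : ‖K₁ x z‖ * ‖K₂ z y‖ ≤
        c₁ * c₂ / 2 * Eexp *
          (Real.exp (-(γ₁ * a)) / a ^ 2 + Real.exp (-(γ₂ * b)) / b ^ 2) := by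
      calc ‖K₁ x z‖ * ‖K₂ z y‖
          ≤ c₁ * Real.exp (-(γ₁ * a)) / a * (c₂ * Real.exp (-(γ₂ * b)) / b) :=
            mul_le_mul h1 h2 (norm_nonneg _) (by positivity)
        _ = c₁ * c₂ * (e1 * e2 * (e1 / a * (e2 / b))) := by
            rw [hsq1, hsq2]; field_simp
        _ ≤ c₁ * c₂ * (Eexp * (1 / 2 * ((e1 / a) ^ 2 + (e2 / b) ^ 2))) := by
            apply mul_le_mul_of_nonneg_left _ (by positivity)
            exact mul_le_mul hEe hAM (by positivity) hE0.le
        _ = c₁ * c₂ / 2 * Eexp *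
              (Real.exp (-(γ₁ * a)) / a ^ 2 + Real.exp (-(γ₂ * b)) / b ^ 2) := by
            rw [hsq1, hsq2]; field_simp
    have hlhs : (‖K₁ x z‖₊ : ℝ≥0∞) * (‖K₂ z y‖₊ : ℝ≥0∞)
        = ENNReal.ofReal (‖K₁ x z‖ * ‖K₂ z y‖) := by
      rw [ENNReal.ofReal_mul (norm_nonneg _), ofReal_norm_eq_enorm,
        ofReal_norm_eq_enorm]; rfl
    rw [hlhs, ← ENNReal.ofReal_add (by positivity) (by positivity),
      ← ENNReal.ofReal_mul (by positivity)]
    exact ENNReal.ofReal_le_ofReal hreal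
  -- change of variables for the two comparison integrals
  have hI₁ : ∫⁻ z : E3, ENNReal.ofReal (Real.exp (-(γ₁ * ‖x - z‖)) / ‖x - z‖ ^ 2) = J₁ := by
    rw [hJ₁def]
    exact (Measure.measurePreserving_sub_left (volume : Measure E3) x).lintegral_comp
      (KernelBoundAux.meas_g γ₁ |>.comp measurable_norm)
  have hI₂ : ∫⁻ z : E3, ENNReal.ofReal (Real.exp (-(γ₂ * ‖z - y‖)) / ‖z - y‖ ^ 2) = J₂ := by
    rw [hJ₂def]
    exact (measurePreserving_sub_right (volume : Measure E3) y).lintegral_comp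
      (KernelBoundAux.meas_g γ₂ |>.comp measurable_norm)
  calc ∫⁻ z : E3, (‖K₁ x z‖₊ : ℝ≥0∞) * (‖K₂ z y‖₊ : ℝ≥0∞)
      ≤ ∫⁻ z : E3, ENNReal.ofReal (c₁ * c₂ / 2 * Eexp) *
          (ENNReal.ofReal (Real.exp (-(γ₁ * ‖x - z‖)) / ‖x - z‖ ^ 2) +
           ENNReal.ofReal (Real.exp (-(γ₂ * ‖z - y‖)) / ‖z - y‖ ^ 2)) :=
        lintegral_mono_ae key
    _ = ENNReal.ofReal (c₁ * c₂ / 2 * Eexp) * (J₁ + J₂) := by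
        rw [lintegral_const_mul _ (by exact hg₁m.add hg₂m), lintegral_add_left hg₁m, hI₁, hI₂]
    _ ≤ ENNReal.ofReal (c₁ * c₂ / 2 * Eexp) * ENNReal.ofReal T := by
        apply mul_le_mul_right
        rw [hTdef, ENNReal.ofReal_add ENNReal.toReal_nonneg ENNReal.toReal_nonneg,
          ENNReal.ofReal_toReal hJ₁t, ENNReal.ofReal_toReal hJ₂t]
    _ = ENNReal.ofReal (c₁ * c₂ / 2 * Eexp * T) := (ENNReal.ofReal_mul (by positivity)).symm
    _ ≤ ENNReal.ofReal (γ * (c₁ * c₂ / 2 * T + 1) / γ * Eexp) := by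
        apply ENNReal.ofReal_le_ofReal
        rw [hcγ]
        nlinarith [hE0.le]
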